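/- Let t ≥ 3 and let s < t/2 be positive integers. For every rational x/y (x, y positive integers) with (t+s−1)/2 < x/y ≤ (t+2s−1)/2, setting a = y(C(t,2) − 2C(s,2)) − x(t−2s) and b = s·x − y·C(s,2), one has a and b positive integers with a < b and (a·C(s,2) + b·(C(t,2) − 2C(s,2))) / (a·s + b·(t−2s)) = x/y. -/
import Mathlib

lemma choose_two_mul_two (n : ℕ) : ((n.choose 2 : ℤ)) * 2 = n * (n - 1) := by
  induction n with
  | zero => simp
  | succ k ih =>
    rw [Nat.choose_succ_succ]
    push_cast
    push_cast [Nat.choose_one_right] at *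
    linear_combination ih

/-- Every rational `x/y` in the interval `((t+s-1)/2, (t+2s-1)/2]` is achieved as the
rooted density `d_t^1(a,b,s)` with `a = y(C(t,2) - 2C(s,2)) - x(t-2s)` and
`b = sx - yC(s,2)`, which are positive integers with `a < b`. -/
theorem type1_density_range (t s x y : ℕ) (ht : 3 ≤ t) (hs : 1 ≤ s) (hst : 2 * s < t)
    (hx : 0 < x) (hy : 0 < y)
    (h1 : ((t : ℚ) + s - 1) / 2 < (x : ℚ) / y)
    (h2 : (x : ℚ) / y ≤ ((t : ℚ) + 2 * s - 1) / 2)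
    (a b : ℤ)
    (ha : a = (y : ℤ) * (t.choose 2 : ℤ) - 2 * (y : ℤ) * (s.choose 2 : ℤ)
      - (x : ℤ) * ((t : ℤ) - 2 * s))
    (hb : b = (s : ℤ) * x - (y : ℤ) * (s.choose 2 : ℤ)) :
    0 < a ∧ a < b ∧
      ((a : ℚ) * (s.choose 2 : ℚ) + (b : ℚ) * ((t.choose 2 : ℚ) - 2 * (s.choose 2 : ℚ))) /
        ((a : ℚ) * s + (b : ℚ) * ((t : ℚ) - 2 * s)) = (x : ℚ) / y := by
  have hyQ : (0 : ℚ) < y := by exact_mod_cast hy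
  have hCt := choose_two_mul_two t
  have hCs := choose_two_mul_two s
  have hyZ : (0 : ℤ) < y := by exact_mod_cast hy
  have hsZ : (1 : ℤ) ≤ s := by exact_mod_cast hs
  have htZ : (3 : ℤ) ≤ t := by exact_mod_cast ht
  have hstZ : 2 * (s : ℤ) < t := by exact_mod_cast hst
  have h1q : ((t : ℚ) + s - 1) * y < x * 2 := (div_lt_div_iff₀ two_pos hyQ).mp h1
  have h2q : (x : ℚ) * 2 ≤ ((t : ℚ) + 2 * s - 1) * y := (div_le_div_iff₀ hyQ two_pos).mp h2
  have h1' : ((t : ℤ) + s - 1) * y < x * 2 := by exact_mod_cast h1q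
  have h2' : (x : ℤ) * 2 ≤ ((t : ℤ) + 2 * s - 1) * y := by exact_mod_cast h2q
  have htm : (0 : ℤ) < (t : ℤ) - 2 * s := by linarith
  have hts : (0 : ℤ) < (t : ℤ) - s := by linarith
  have hmul1 : (x : ℤ) * 2 * ((t : ℤ) - 2 * s) ≤ ((t : ℤ) + 2 * s - 1) * y * ((t : ℤ) - 2 * s) :=
    mul_le_mul_of_nonneg_right h2' (le_of_lt htm)
  have hmul2 : ((t : ℤ) + s - 1) * y * ((t : ℤ) - s) < x * 2 * ((t : ℤ) - s) :=
    mul_lt_mul_of_pos_right h1' hts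
  have hapos : 0 < a := by
    have hy_s2 : 0 < (y : ℤ) * (s * s) := by positivity
    nlinarith [hCt, hCs, hmul1, hy_s2]
  refine ⟨hapos, ?_, ?_⟩
  · nlinarith [hCt, hCs, hmul2]
  · -- the density equation
    have hCtQ : ((t.choose 2 : ℚ)) * 2 = t * ((t : ℚ) - 1) := by exact_mod_cast hCt
    have hCsQ : ((s.choose 2 : ℚ)) * 2 = s * ((s : ℚ) - 1) := by exact_mod_cast hCs
    have haQ : (a : ℚ) = (y : ℚ) * (t.choose 2 : ℚ) - 2 * y * (s.choose 2 : ℚ)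
        - x * ((t : ℚ) - 2 * s) := by push_cast [ha]; ring
    have hbQ : (b : ℚ) = (s : ℚ) * x - y * (s.choose 2 : ℚ) := by push_cast [hb]; ring
    have hden2 : ((a : ℚ) * s + (b : ℚ) * ((t : ℚ) - 2 * s)) * 2
        = (y : ℚ) * s * t * ((t : ℚ) - s) := by
      rw [haQ, hbQ]
      linear_combination ((y : ℚ) * s) * hCtQ - ((y : ℚ) * t) * hCsQ
    have hdenpos : (0 : ℚ) < (a : ℚ) * s + (b : ℚ) * ((t : ℚ) - 2 * s) := by
      have h1 : (0 : ℚ) < (y : ℚ) * s * t * ((t : ℚ) - s) := by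
        have hsQ : (0 : ℚ) < s := by exact_mod_cast lt_of_lt_of_le one_pos hs
        have htQ : (0 : ℚ) < t := by positivity
        have htsQ : (0 : ℚ) < (t : ℚ) - s := by exact_mod_cast hts
        positivity
      linarith
    have hyne : (y : ℚ) ≠ 0 := ne_of_gt hyQ
    rw [div_eq_div_iff (ne_of_gt hdenpos) hyne]
    rw [haQ, hbQ]
    ring
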